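/- Let A : X → Y be an injective bounded linear operator between Hilbert spaces, let X_n ⊆ X be a finite-dimensional subspace with orthogonal projection P_{X_n}, and let Y_n = A(X_n) with orthogonal projection P_{Y_n}. Then the Moore-Penrose pseudoinverse of the composition A ∘ P_{X_n} is given by (A P_{X_n})† = A⁻¹ ∘ P_{Y_n}, i.e., for every y ∈ Y, (A P_{X_n})† y is the unique element x ∈ X_n with A x = P_{Y_n} y. -/

import Mathlib

open RealInnerProductSpace

lemma proj_min_aux {Y : Type*} [NormedAddCommGroup Y] [InnerProductSpace ℝ Y]
    (K : Submodule ℝ Y) [K.HasOrthogonalProjection] (y : Y) {v : Y} (hv : v ∈ K) :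
    ‖(Submodule.orthogonalProjectionOnto K y : Y) - y‖ ^ 2 + ‖(Submodule.orthogonalProjectionOnto K y : Y) - v‖ ^ 2
      = ‖v - y‖ ^ 2 := by
  have horth : ⟪y - (Submodule.orthogonalProjectionOnto K y : Y), (Submodule.orthogonalProjectionOnto K y : Y) - v⟫ = 0 :=
    Submodule.starProjection_inner_eq_zero y _ (K.sub_mem (Submodule.orthogonalProjectionOnto K y).2 hv)
  have h := norm_add_sq_real (y - (Submodule.orthogonalProjectionOnto K y : Y))
    ((Submodule.orthogonalProjectionOnto K y : Y) - v)
  rw [horth] at h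
  have hsum : y - (Submodule.orthogonalProjectionOnto K y : Y) + ((Submodule.orthogonalProjectionOnto K y : Y) - v)
      = y - v := by abel
  rw [hsum] at h
  rw [norm_sub_rev ((Submodule.orthogonalProjectionOnto K y : Y)) y, norm_sub_rev v y]
  linarith

/-- Theorem 4 of Aspri–Korolev–Scherzer: if `A` is injective, the Moore–Penrose inverse of
`A ∘ P_{Xₙ}` is `A⁻¹ ∘ P_{Yₙ}` where `Yₙ = A(Xₙ)`.  Concretely: for every `y`, there is a unique
`x ∈ Xₙ` with `A x = P_{Yₙ} y`, and this `x` is the minimum-norm minimizer of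
`z ↦ ‖A (P_{Xₙ} z) - y‖`. -/
theorem moore_penrose_of_projected_forward
    {X Y : Type*} [NormedAddCommGroup X] [InnerProductSpace ℝ X] [CompleteSpace X]
    [NormedAddCommGroup Y] [InnerProductSpace ℝ Y] [CompleteSpace Y]
    (A : X →L[ℝ] Y) (hA : Function.Injective A)
    (Xn : Submodule ℝ X) [FiniteDimensional ℝ Xn] :
    ∀ y : Y, ∃! x : X,
      x ∈ Xn ∧ A x = (Submodule.orthogonalProjectionOnto (Xn.map (A : X →ₗ[ℝ] Y)) y : Y) ∧
      (∀ z : X, ‖A (Xn.subtypeL (Submodule.orthogonalProjectionOnto Xn x)) - y‖ ≤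
                ‖A (Xn.subtypeL (Submodule.orthogonalProjectionOnto Xn z)) - y‖) ∧
      (∀ z : X, (∀ w : X, ‖A (Xn.subtypeL (Submodule.orthogonalProjectionOnto Xn z)) - y‖ ≤
                          ‖A (Xn.subtypeL (Submodule.orthogonalProjectionOnto Xn w)) - y‖) → ‖x‖ ≤ ‖z‖) := by
  intro y
  set K := Xn.map (A : X →ₗ[ℝ] Y) with hK
  haveI : FiniteDimensional ℝ K := Module.Finite.map Xn (A : X →ₗ[ℝ] Y)
  have hPK : ((Submodule.orthogonalProjectionOnto K y : Y)) ∈ K := (Submodule.orthogonalProjectionOnto K y).2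
  obtain ⟨x, hxXn, hxA⟩ := hPK
  have hmin : ∀ v ∈ K, ‖(Submodule.orthogonalProjectionOnto K y : Y) - y‖ ≤ ‖v - y‖ := by
    intro v hv
    have h := proj_min_aux K y hv
    nlinarith [norm_nonneg ((Submodule.orthogonalProjectionOnto K y : Y) - v),
      norm_nonneg ((Submodule.orthogonalProjectionOnto K y : Y) - y), norm_nonneg (v - y)]
  have huniq : ∀ v ∈ K, ‖v - y‖ ≤ ‖(Submodule.orthogonalProjectionOnto K y : Y) - y‖ →
      v = (Submodule.orthogonalProjectionOnto K y : Y) := by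
    intro v hv hle
    have h := proj_min_aux K y hv
    have h2 : ‖(Submodule.orthogonalProjectionOnto K y : Y) - v‖ = 0 := by
      have := hmin v hv
      have hn := norm_nonneg ((Submodule.orthogonalProjectionOnto K y : Y) - v)
      nlinarith [norm_nonneg ((Submodule.orthogonalProjectionOnto K y : Y) - y), norm_nonneg (v - y),
        mul_self_nonneg (‖(Submodule.orthogonalProjectionOnto K y : Y) - y‖ - ‖v - y‖)]
    exact (sub_eq_zero.mp (norm_eq_zero.mp h2)).symm
  -- the projection within Xn fixes x
  have hprojx : (Xn.subtypeL (Submodule.orthogonalProjectionOnto Xn x) : X) = x := by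
    simpa using Submodule.starProjection_eq_self_iff.mpr hxXn
  -- any A (subtypeL (proj z)) lies in K
  have hmem : ∀ z : X, A (Xn.subtypeL (Submodule.orthogonalProjectionOnto Xn z)) ∈ K := fun z =>
    ⟨_, (Submodule.orthogonalProjectionOnto Xn z).2, rfl⟩
  have hAx : A (Xn.subtypeL (Submodule.orthogonalProjectionOnto Xn x)) = (Submodule.orthogonalProjectionOnto K y : Y) := by
    rw [hprojx]; exact hxA
  refine ⟨x, ⟨hxXn, hxA, ?_, ?_⟩, ?_⟩
  · intro z
    rw [hAx]
    exact hmin _ (hmem z)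
  · intro z hz
    have h1 : ‖A (Xn.subtypeL (Submodule.orthogonalProjectionOnto Xn z)) - y‖ ≤
        ‖(Submodule.orthogonalProjectionOnto K y : Y) - y‖ := by
      have := hz x
      rwa [hAx] at this
    have h2 := huniq _ (hmem z) h1
    have h3 : (Xn.subtypeL (Submodule.orthogonalProjectionOnto Xn z) : X) = x := by
      apply hA
      exact h2.trans hxA.symm
    calc ‖x‖ = ‖(Submodule.orthogonalProjectionOnto Xn z : X)‖ := by rw [← h3]; rfl
    _ ≤ ‖z‖ := by
        have := (Submodule.orthogonalProjectionOnto Xn).le_opNorm z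
        calc ‖(Submodule.orthogonalProjectionOnto Xn z : X)‖ = ‖Submodule.orthogonalProjectionOnto Xn z‖ := rfl
        _ ≤ ‖Submodule.orthogonalProjectionOnto Xn‖ * ‖z‖ := this
        _ ≤ 1 * ‖z‖ := by
            have := Submodule.orthogonalProjectionOnto_norm_le (K := Xn)
            have hz0 := norm_nonneg z
            nlinarith
        _ = ‖z‖ := one_mul _
  · rintro x' ⟨hx'Xn, hx'A, -, -⟩
    apply hA
    exact hx'A.trans hxA.symm
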